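/- Every Artinian module over a commutative Noetherian ring is pure injective. -/

import Mathlib

universe u

/-- A linear map is a pure monomorphism if it is injective and remains injective after
tensoring with every `R`-module. -/
def IsPureMono (R : Type u) [CommRing R] {M N : Type u} [AddCommGroup M] [Module R M]
    [AddCommGroup N] [Module R N] (f : M →ₗ[R] N) : Prop :=
  Function.Injective f ∧
    ∀ (L : Type u) [AddCommGroup L] [Module R L], Function.Injective (LinearMap.rTensor L f)

/-- A module `D` is pure injective if every homomorphism into `D` extends along every
pure monomorphism. -/
def IsPureInjective (R : Type u) [CommRing R] (D : Type u) [AddCommGroup D] [Module R D] :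
    Prop :=
  ∀ (M N : Type u) [AddCommGroup M] [Module R M] [AddCommGroup N] [Module R N]
    (f : M →ₗ[R] N), IsPureMono R f → ∀ g : M →ₗ[R] D, ∃ h : N →ₗ[R] D, h ∘ₗ f = g

/-- A module is finitely embedded if it embeds into the injective envelope of a direct sum
of finitely many simple modules, i.e. into an injective module which is an essential
extension of a finitely generated semisimple submodule. -/
def FinitelyEmbedded (R : Type u) [CommRing R] (M : Type u) [AddCommGroup M] [Module R M] :
    Prop :=
  ∃ E : ModuleCat.{u} R, Module.Injective R E ∧
    ∃ S : Submodule R E, IsSemisimpleModule R S ∧ S.FG ∧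
      (∀ P : Submodule R E, P ≠ ⊥ → S ⊓ P ≠ ⊥) ∧
      ∃ f : M →ₗ[R] E, Function.Injective f


universe v

set_option linter.unusedVariables false

section AuxPureInj

open TensorProduct LinearMap


theorem artinian_coset_fip {R : Type u} [CommRing R] {M : Type u} [AddCommGroup M] [Module R M]
    [IsArtinian R M] {ι : Type v} (N : ι → Submodule R M) (c : ι → M)
    (H : ∀ t : Finset ι, ∃ x, ∀ i ∈ t, x - c i ∈ N i) :
    ∃ x, ∀ i, x - c i ∈ N i := by
  classical
  obtain ⟨K, ⟨t₀, ht₀⟩, hmin⟩ := IsArtinian.set_has_minimal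
    (Set.range fun t : Finset ι => t.inf N) ⟨(∅ : Finset ι).inf N, ∅, rfl⟩
  obtain ⟨x₀, hx₀⟩ := H t₀
  refine ⟨x₀, fun i => ?_⟩
  obtain ⟨x₁, hx₁⟩ := H (insert i t₀)
  have hle : (insert i t₀).inf N ≤ K := ht₀ ▸ Finset.inf_mono (Finset.subset_insert i t₀)
  have heq : (insert i t₀).inf N = K := by
    by_contra hne
    exact hmin _ ⟨insert i t₀, rfl⟩ (lt_of_le_of_ne hle hne)
  have h01 : x₀ - x₁ ∈ (insert i t₀).inf N := by
    rw [heq, ← ht₀, Submodule.mem_finsetInf]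
    intro j hj
    have : (x₀ - c j) - (x₁ - c j) ∈ N j :=
      Submodule.sub_mem _ (hx₀ j hj) (hx₁ j (Finset.mem_insert_of_mem hj))
    simpa using this
  have h1 : x₀ - x₁ ∈ N i := Submodule.mem_finsetInf.mp h01 i (Finset.mem_insert_self i t₀)
  have h2 : x₁ - c i ∈ N i := hx₁ i (Finset.mem_insert_self i t₀)
  have : (x₀ - x₁) + (x₁ - c i) ∈ N i := Submodule.add_mem _ h1 h2
  simpa using this


theorem pure_solv {R : Type u} [CommRing R] {A B : Type u} [AddCommGroup A] [Module R A]
    [AddCommGroup B] [Module R B] (f : A →ₗ[R] B)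
    (hp : ∀ (L : Type u) [AddCommGroup L] [Module R L], Function.Injective (LinearMap.rTensor L f))
    {ι κ : Type u} [Fintype ι] [Fintype κ]
    (r : κ → ι → R) (a : κ → A) (x : ι → B)
    (hx : ∀ j, ∑ k, r j k • x k = f (a j)) :
    ∃ y : ι → A, ∀ j, ∑ k, r j k • y k = a j := by
  classical
  set φ : (ι → R) →ₗ[R] (κ → R) := Matrix.mulVecLin (Matrix.of r) with hφ
  set L : Type u := (κ → R) ⧸ LinearMap.range φ with hL
  set π : (κ → R) →ₗ[R] L := (LinearMap.range φ).mkQ with hπ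
  have hexact0 : Function.Exact φ π := by
    rw [LinearMap.exact_iff, hπ, Submodule.ker_mkQ]
  have hexact : Function.Exact (lTensor A φ) (lTensor A π) :=
    lTensor_exact A hexact0 (Submodule.mkQ_surjective _)
  set e : κ → (κ → R) := fun j' => Pi.single j' 1 with he
  set u₀ : A ⊗[R] (κ → R) := ∑ j, a j ⊗ₜ e j with hu₀
  -- key : image of u₀ in A ⊗ L is 0
  have key : lTensor A π u₀ = 0 := by
    apply hp L
    have comm : rTensor L f (lTensor A π u₀) = lTensor B π (rTensor (κ → R) f u₀) := by
      rw [← LinearMap.comp_apply, ← LinearMap.comp_apply, rTensor_comp_lTensor,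
        lTensor_comp_rTensor]
    rw [comm, map_zero]
    have h1 : rTensor (κ → R) f u₀ = ∑ j, ∑ k, x k ⊗ₜ[R] (r j k • e j) := by
      rw [hu₀, map_sum]
      refine Finset.sum_congr rfl fun j _ => ?_
      rw [rTensor_tmul, ← hx j, sum_tmul]
      refine Finset.sum_congr rfl fun k _ => ?_
      rw [smul_tmul]
    rw [h1, Finset.sum_comm, map_sum]
    refine Finset.sum_eq_zero fun k _ => ?_
    rw [← tmul_sum, lTensor_tmul]
    have h2 : π (∑ j, r j k • e j) = 0 := by
      rw [Submodule.mkQ_apply, Submodule.Quotient.mk_eq_zero]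
      refine ⟨Pi.single k 1, ?_⟩
      rw [hφ]
      ext j
      simp [he, Matrix.mulVecLin_apply, Matrix.mulVec_single, Pi.single_apply, Finset.sum_ite_eq']
    rw [h2, tmul_zero]
  obtain ⟨u₁, hu₁⟩ := (hexact u₀).mp key
  obtain ⟨S, hS⟩ := TensorProduct.exists_finset u₁
  refine ⟨fun k => ∑ p ∈ S, p.2 k • p.1, fun j => ?_⟩
  -- contraction with j-th coordinate
  set ε : A ⊗[R] (κ → R) →ₗ[R] A :=
    (TensorProduct.rid R A).toLinearMap ∘ₗ lTensor A (LinearMap.proj j) with hε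
  have hεtmul : ∀ (z : A) (v : κ → R), ε (z ⊗ₜ v) = v j • z := by
    intro z v
    simp [hε, TensorProduct.rid_tmul]
  have e1 : ε u₀ = a j := by
    rw [hu₀, map_sum]
    rw [Finset.sum_congr rfl fun j' _ => hεtmul (a j') (e j')]
    simp [he, Pi.single_apply, Finset.sum_ite_eq']
  have e2 : ε (lTensor A φ u₁) = ∑ k, r j k • ∑ p ∈ S, p.2 k • p.1 := by
    rw [hS, map_sum, map_sum]
    rw [Finset.sum_congr rfl fun p _ => by
      rw [lTensor_tmul, hεtmul p.1 (φ p.2)]]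
    have hφval : ∀ v : ι → R, φ v j = ∑ k, r j k * v k := fun v => rfl
    calc ∑ p ∈ S, φ p.2 j • p.1 = ∑ p ∈ S, ∑ k, (r j k * p.2 k) • p.1 := by
          refine Finset.sum_congr rfl fun p _ => ?_
          rw [hφval, Finset.sum_smul]
      _ = ∑ k, r j k • ∑ p ∈ S, p.2 k • p.1 := by
          rw [Finset.sum_comm]
          refine Finset.sum_congr rfl fun k _ => ?_
          rw [Finset.smul_sum]
          refine Finset.sum_congr rfl fun p _ => ?_
          rw [mul_smul]
  rw [← e2, hu₁, e1]


section Machinery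

variable {R : Type u} [CommRing R]

/-- Finite solvability of linear systems with constants in the domain of a partial map. -/
def FS {B D : Type u} [AddCommGroup B] [Module R B] [AddCommGroup D] [Module R D]
    (h : B →ₗ.[R] D) : Prop :=
  ∀ (ι κ : Type u) [Fintype ι] [Fintype κ] (r : κ → ι → R) (c : κ → h.domain),
    (∃ x : ι → B, ∀ j, ∑ k, r j k • x k = (c j : B)) →
    ∃ y : ι → D, ∀ j, ∑ k, r j k • y k = h (c j)

end Machinery

/-- A finite linear system in variables `x : ι → B` plus the distinguished element `b`,
with constants in `C`, which is solvable in `B`. -/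
structure PSys (R : Type u) [CommRing R] {B : Type u} [AddCommGroup B] [Module R B]
    (C : Submodule R B) (b : B) : Type (u + 1) where
  ι : Type u
  κ : Type u
  [fι : Fintype ι]
  [fκ : Fintype κ]
  r : κ → ι → R
  s : κ → R
  c : κ → C
  solv : ∃ x : ι → B, ∀ j, (∑ k, r j k • x k) + s j • b = (c j : B)

attribute [instance] PSys.fι PSys.fκ

namespace PSys

variable {R : Type u} [CommRing R] {B D : Type u} [AddCommGroup B] [Module R B]
  [AddCommGroup D] [Module R D] (h : B →ₗ.[R] D) (b : B)

/-- `e` is an admissible value at `b` for the system `σ`. -/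
def V (σ : PSys R h.domain b) (e : D) : Prop :=
  ∃ y : σ.ι → D, ∀ j, (∑ k, σ.r j k • y k) + σ.s j • e = h (σ.c j)

/-- The submodule of which the set of admissible values is a coset. -/
def N (σ : PSys R h.domain b) : Submodule R D where
  carrier := {e | ∃ y : σ.ι → D, ∀ j, (∑ k, σ.r j k • y k) + σ.s j • e = 0}
  zero_mem' := ⟨0, fun j => by simp⟩
  add_mem' := by
    rintro e₁ e₂ ⟨y₁, hy₁⟩ ⟨y₂, hy₂⟩
    refine ⟨y₁ + y₂, fun j => ?_⟩
    simp only [Pi.add_apply, smul_add, Finset.sum_add_distrib]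
    rw [add_add_add_comm, hy₁ j, hy₂ j, add_zero]
  smul_mem' := by
    rintro t e ⟨y, hy⟩
    refine ⟨t • y, fun j => ?_⟩
    have : ∀ k, σ.r j k • (t • y k) = t • (σ.r j k • y k) := fun k => smul_comm _ _ _
    simp only [Pi.smul_apply, this, smul_comm (σ.s j) t e, ← Finset.smul_sum, ← smul_add,
      hy j, smul_zero]

theorem V_sub_mem {σ : PSys R h.domain b} {e e' : D} (he : σ.V h b e) (he' : σ.V h b e') :
    e' - e ∈ σ.N h b := by
  obtain ⟨y, hy⟩ := he
  obtain ⟨y', hy'⟩ := he'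
  refine ⟨y' - y, fun j => ?_⟩
  simp only [Pi.sub_apply, smul_sub, Finset.sum_sub_distrib]
  rw [sub_add_sub_comm, hy' j, hy j, sub_self]

theorem V_of_sub_mem {σ : PSys R h.domain b} {e e' : D} (he : σ.V h b e)
    (hmem : e' - e ∈ σ.N h b) : σ.V h b e' := by
  obtain ⟨y, hy⟩ := he
  obtain ⟨z, hz⟩ := hmem
  refine ⟨y + z, fun j => ?_⟩
  have : e' = e + (e' - e) := by abel
  rw [this]
  simp only [Pi.add_apply, smul_add, Finset.sum_add_distrib]
  rw [add_add_add_comm, hy j, hz j, add_zero]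

/-- Each system admits some admissible value, by finite solvability. -/
theorem V_nonempty (hfs : FS h) (σ : PSys R h.domain b) : ∃ e, σ.V h b e := by
  classical
  obtain ⟨x, hx⟩ := σ.solv
  obtain ⟨y, hy⟩ := hfs (σ.ι ⊕ PUnit.{u + 1}) σ.κ
    (fun j => Sum.elim (σ.r j) fun _ => σ.s j) σ.c
    ⟨Sum.elim x fun _ => b, fun j => by
      simpa [Fintype.sum_sum_type] using hx j⟩
  refine ⟨y (Sum.inr PUnit.unit), fun k => y (Sum.inl k), fun j => ?_⟩
  simpa [Fintype.sum_sum_type] using hy j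

end PSys

namespace PSys

variable {R : Type u} [CommRing R] {B D : Type u} [AddCommGroup B] [Module R B]
  [AddCommGroup D] [Module R D] (h : B →ₗ.[R] D) (b : B)

/-- A trivial system. -/
def triv : PSys R h.domain b where
  ι := PEmpty.{u + 1}
  κ := PEmpty.{u + 1}
  r := fun j => j.elim
  s := fun j => j.elim
  c := fun j => j.elim
  solv := ⟨fun k => k.elim, fun j => j.elim⟩

theorem V_triv (e : D) : (triv h b).V h b e := ⟨fun k => k.elim, fun j => j.elim⟩

/-- Combining two systems. -/
def comb (σ₁ σ₂ : PSys R h.domain b) : PSys R h.domain b where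
  ι := σ₁.ι ⊕ σ₂.ι
  κ := σ₁.κ ⊕ σ₂.κ
  r := Sum.elim (fun j => Sum.elim (σ₁.r j) fun _ => 0) fun j => Sum.elim (fun _ => 0) (σ₂.r j)
  s := Sum.elim σ₁.s σ₂.s
  c := Sum.elim σ₁.c σ₂.c
  solv := by
    obtain ⟨x₁, hx₁⟩ := σ₁.solv
    obtain ⟨x₂, hx₂⟩ := σ₂.solv
    refine ⟨Sum.elim x₁ x₂, fun j => ?_⟩
    cases j with
    | inl j => simpa [Fintype.sum_sum_type] using hx₁ j
    | inr j => simpa [Fintype.sum_sum_type] using hx₂ j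

theorem V_comb {σ₁ σ₂ : PSys R h.domain b} {e : D} (hV : (comb h b σ₁ σ₂).V h b e) :
    σ₁.V h b e ∧ σ₂.V h b e := by
  obtain ⟨y, hy⟩ := hV
  constructor
  · exact ⟨fun k => y (Sum.inl k), fun j => by have := hy (Sum.inl j); erw [Fintype.sum_sum_type] at this; simpa [comb] using this⟩
  · exact ⟨fun k => y (Sum.inr k), fun j => by have := hy (Sum.inr j); erw [Fintype.sum_sum_type] at this; simpa [comb] using this⟩

/-- There is a simultaneously admissible value for all systems. -/
theorem exists_global [IsArtinian R D] (hfs : FS h) : ∃ d : D, ∀ σ : PSys R h.domain b, σ.V h b d := by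
  classical
  have hcomb : ∀ t : Finset (PSys R h.domain b), ∃ σ' : PSys R h.domain b, ∀ e, σ'.V h b e → ∀ σ ∈ t, σ.V h b e := by
    intro t
    induction t using Finset.induction_on with
    | empty => exact ⟨triv h b, fun e _ σ hσ => absurd hσ (Finset.notMem_empty σ)⟩
    | @insert σ₀ t' hσt ih =>
      obtain ⟨σ', hσ'⟩ := ih
      refine ⟨comb h b σ₀ σ', fun e he σ hσ => ?_⟩
      obtain ⟨h₀, h'⟩ := V_comb h b he
      rcases Finset.mem_insert.mp hσ with rfl | hmem
      · exact h₀
      · exact hσ' e h' σ hmem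
  choose cc hcc using V_nonempty h b hfs
  have hFIP : ∀ t : Finset (PSys R h.domain b), ∃ x, ∀ σ ∈ t, x - cc σ ∈ σ.N h b := by
    intro t
    obtain ⟨σ', hσ'⟩ := hcomb t
    obtain ⟨e, he⟩ := V_nonempty h b hfs σ'
    exact ⟨e, fun σ hσ => V_sub_mem h b (hcc σ) (hσ' e he σ hσ)⟩
  obtain ⟨d, hd⟩ := artinian_coset_fip (fun σ => σ.N h b) cc hFIP
  exact ⟨d, fun σ => V_of_sub_mem h b (hcc σ) (hd σ)⟩

end PSys

theorem ext_step {R : Type u} [CommRing R] {B D : Type u} [AddCommGroup B] [Module R B]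
    [AddCommGroup D] [Module R D] [IsArtinian R D] (h : B →ₗ.[R] D) (hfs : FS h) (b : B)
    (hb : b ∉ h.domain) : ∃ h' : B →ₗ.[R] D, FS h' ∧ h ≤ h' ∧ b ∈ h'.domain := by
  classical
  obtain ⟨d, hd⟩ := PSys.exists_global h b hfs
  have key : ∀ (t : R) (ht : t • b ∈ h.domain), t • d = h ⟨t • b, ht⟩ := by
    intro t ht
    obtain ⟨y, hy⟩ := hd
      { ι := PEmpty.{u + 1}
        κ := PUnit.{u + 1}
        r := fun _ j => j.elim
        s := fun _ => t
        c := fun _ => ⟨t • b, ht⟩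
        solv := ⟨fun k => k.elim, fun _ => by simp⟩ }
    simpa using hy PUnit.unit
  have H0 : ∀ t : R, t • b = 0 → t • d = 0 := by
    intro t ht0
    have hmem : t • b ∈ h.domain := ht0 ▸ h.domain.zero_mem
    rw [key t hmem]
    have h0 : (⟨t • b, hmem⟩ : h.domain) = 0 := Subtype.ext ht0
    rw [h0, h.map_zero]
  set ext := LinearPMap.mkSpanSingleton' (σ := RingHom.id R) b d H0 with hext
  have agree : ∀ (x : h.domain) (y : ext.domain), (x : B) = y → h x = ext y := by
    rintro x ⟨yv, hy⟩ hxy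
    obtain ⟨t, ht⟩ := Submodule.mem_span_singleton.mp hy
    subst ht
    rw [LinearPMap.mkSpanSingleton'_apply b d H0 t hy]
    have hxy' : (x : B) = t • b := hxy
    have hmem : t • b ∈ h.domain := hxy' ▸ x.2
    rw [show x = ⟨t • b, hmem⟩ from Subtype.ext hxy']
    exact (key t hmem).symm
  refine ⟨h.sup ext agree, ?_, h.left_le_sup ext agree, ?_⟩
  · intro ι κ _ _ r c hsolv
    obtain ⟨x, hx⟩ := hsolv
    have hdec : ∀ j, ∃ (u : h.domain) (t : R), (u : B) + t • b = (c j : B) ∧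
        (h.sup ext agree) (c j) = h u + t • d := by
      intro j
      have hcj : (c j : B) ∈ h.domain ⊔ ext.domain := (c j).2
      obtain ⟨u, hu, v, hv, huv⟩ := Submodule.mem_sup.mp hcj
      obtain ⟨t, ht⟩ := Submodule.mem_span_singleton.mp hv
      subst ht
      refine ⟨⟨u, hu⟩, t, huv, ?_⟩
      rw [LinearPMap.sup_apply agree ⟨u, hu⟩ ⟨t • b, hv⟩ (c j) huv,
        LinearPMap.mkSpanSingleton'_apply b d H0 t hv, RingHom.id_apply]
    choose uu tt hsum happ using hdec
    obtain ⟨y, hy⟩ := hd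
      { ι := ι
        κ := κ
        r := r
        s := fun j => - tt j
        c := uu
        solv := ⟨x, fun j => by
          rw [neg_smul, ← sub_eq_add_neg, hx j, ← hsum j, add_sub_cancel_right]⟩ }
    refine ⟨y, fun j => ?_⟩
    have hyj := hy j
    rw [neg_smul, ← sub_eq_add_neg, sub_eq_iff_eq_add] at hyj
    rw [happ j]
    exact hyj
  · exact Submodule.mem_sup_right (Submodule.mem_span_singleton_self b)

theorem fs_base {R : Type u} [CommRing R] {A B D : Type u} [AddCommGroup A] [Module R A]
    [AddCommGroup B] [Module R B] [AddCommGroup D] [Module R D]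
    (f : A →ₗ[R] B) (hinj : Function.Injective f)
    (hp : ∀ (L : Type u) [AddCommGroup L] [Module R L], Function.Injective (rTensor L f))
    (g : A →ₗ[R] D) :
    FS (⟨LinearMap.range f,
      g ∘ₗ (LinearEquiv.ofInjective f hinj).symm.toLinearMap⟩ : B →ₗ.[R] D) := by
  intro ι κ _ _ r cv hsolv
  obtain ⟨x, hx⟩ := hsolv
  have hfa : ∀ j, f ((LinearEquiv.ofInjective f hinj).symm (cv j)) = (cv j : B) := by
    intro j
    exact LinearEquiv.ofInjective_symm_apply (h := hinj) (x := ⟨(cv j : B), (cv j).2⟩)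
  obtain ⟨y, hy⟩ := pure_solv f hp r (fun j => (LinearEquiv.ofInjective f hinj).symm (cv j)) x
    fun j => (hx j).trans (hfa j).symm
  refine ⟨fun k => g (y k), fun j => ?_⟩
  have h2 : g ((LinearEquiv.ofInjective f hinj).symm (cv j)) = ∑ k, r j k • g (y k) := by
    rw [← hy j, map_sum]
    exact Finset.sum_congr rfl fun k _ => map_smul g _ _
  exact h2.symm

theorem artinian_pureInjective_aux {R : Type u} [CommRing R] {A B D : Type u}
    [AddCommGroup A] [Module R A] [AddCommGroup B] [Module R B] [AddCommGroup D] [Module R D]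
    [IsArtinian R D] (f : A →ₗ[R] B) (hf : Function.Injective f)
    (hp : ∀ (L : Type u) [AddCommGroup L] [Module R L], Function.Injective (rTensor L f))
    (g : A →ₗ[R] D) : ∃ H : B →ₗ[R] D, H ∘ₗ f = g := by
  classical
  set h₀ : B →ₗ.[R] D :=
    ⟨LinearMap.range f, g ∘ₗ (LinearEquiv.ofInjective f hf).symm.toLinearMap⟩ with hh₀
  set S : Set (B →ₗ.[R] D) := {h | FS h ∧ h₀ ≤ h} with hSdef
  have hS₀ : h₀ ∈ S := ⟨fs_base f hf hp g, le_refl _⟩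
  have hchain : ∀ c ⊆ S, IsChain (· ≤ ·) c → ∀ y ∈ c, ∃ ub ∈ S, ∀ z ∈ c, z ≤ ub := by
    intro c hcS hc y hy
    have hdir : DirectedOn (· ≤ ·) c := hc.directedOn
    refine ⟨LinearPMap.sSup c hdir, ⟨?_, le_trans (hcS hy).2 (LinearPMap.le_sSup hdir hy)⟩,
      fun z hz => LinearPMap.le_sSup hdir hz⟩
    intro ι κ _ _ r cc hsolv
    have hne : (LinearPMap.domain '' c).Nonempty := ⟨_, Set.mem_image_of_mem _ hy⟩
    have hdir' : DirectedOn (· ≤ ·) (LinearPMap.domain '' c) := by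
      rintro _ ⟨p, hp', rfl⟩ _ ⟨q, hq, rfl⟩
      obtain ⟨z, hzc, hpz, hqz⟩ := hdir p hp' q hq
      exact ⟨z.domain, Set.mem_image_of_mem _ hzc, hpz.1, hqz.1⟩
    have hmem : ∀ j, ∃ l : c, ((cc j : B)) ∈ (l : B →ₗ.[R] D).domain := by
      intro j
      have h2 : ((cc j : B)) ∈ sSup (LinearPMap.domain '' c) := (cc j).2
      obtain ⟨P, ⟨l, hlc, rfl⟩, hPm⟩ := (Submodule.mem_sSup_of_directed hne hdir').mp h2
      exact ⟨⟨l, hlc⟩, hPm⟩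
    choose ll hll using hmem
    have hnc : Nonempty c := ⟨⟨y, hy⟩⟩
    have hdirc : Directed (· ≤ ·) (fun z : c => (z : B →ₗ.[R] D)) := by
      intro p q
      obtain ⟨z, hzc, h1, h2⟩ := hdir p p.2 q q.2
      exact ⟨⟨z, hzc⟩, h1, h2⟩
    obtain ⟨z, hz⟩ := hdirc.finset_le (Finset.univ.image ll)
    have hzle : ∀ j, (ll j : B →ₗ.[R] D) ≤ (z : B →ₗ.[R] D) := fun j =>
      hz (ll j) (Finset.mem_image_of_mem ll (Finset.mem_univ j))
    have hzS : (z : B →ₗ.[R] D) ∈ S := hcS z.2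
    obtain ⟨y', hy'⟩ := hzS.1 ι κ r (fun j => ⟨(cc j : B), (hzle j).1 (hll j)⟩)
      ⟨_, fun j => hsolv.choose_spec j⟩
    refine ⟨y', fun j => ?_⟩
    rw [hy' j]
    exact (LinearPMap.le_sSup hdir z.2).2 rfl
  obtain ⟨hm, hle, hmax⟩ := zorn_le_nonempty₀ S hchain h₀ hS₀
  have hmS : hm ∈ S := hmax.1
  have htop : hm.domain = ⊤ := by
    by_contra hne
    obtain ⟨b, hb⟩ : ∃ b, b ∉ hm.domain := by
      by_contra hall
      push_neg at hall
      exact hne (Submodule.eq_top_iff'.mpr hall)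
    obtain ⟨h', hfs', hle', hbmem⟩ := ext_step hm hmS.1 b hb
    have hle2 : h' ≤ hm := hmax.2 ⟨hfs', le_trans hle hle'⟩ hle'
    exact hb (hle2.1 hbmem)
  refine ⟨hm.toFun ∘ₗ LinearMap.codRestrict hm.domain LinearMap.id
    (fun b => htop ▸ Submodule.mem_top), ?_⟩
  ext a
  have hmem : f a ∈ h₀.domain := LinearMap.mem_range_self f a
  have h1 : hm ⟨f a, hle.1 hmem⟩ = h₀ ⟨f a, hmem⟩ := (hle.2 rfl).symm
  have ha : (LinearEquiv.ofInjective f hf).symm ⟨f a, hmem⟩ = a := by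
    apply hf
    rw [LinearEquiv.ofInjective_symm_apply]
  calc (hm.toFun ∘ₗ LinearMap.codRestrict hm.domain LinearMap.id
      (fun b => htop ▸ Submodule.mem_top)) (f a)
      = hm ⟨f a, hle.1 hmem⟩ := rfl
    _ = h₀ ⟨f a, hmem⟩ := h1
    _ = g a := by
      show g ((LinearEquiv.ofInjective f hf).symm ⟨f a, hmem⟩) = g a
      rw [ha]

end AuxPureInj

theorem artinian_pureInjective (R : Type u) [CommRing R] [IsNoetherianRing R]
    (M : Type u) [AddCommGroup M] [Module R M] [IsArtinian R M] :
    IsPureInjective R M := by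
  intro A B _ _ _ _ f hf g
  exact artinian_pureInjective_aux f hf.1 hf.2 g
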